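/- The following exact 8×8 matrix identity holds (decomposition of the Toffoli gate): Λ₂(σ_x) = Λ^{1→3}(V) · (CNOT ⊗ I₂) · (I₂ ⊗ Λ₁(V⁻¹)) · (CNOT ⊗ I₂) · (I₂ ⊗ Λ₁(V)), where V = σ_x^{1/2} = H σ_z^{1/2} H, Λ^{1→3}(V) = diag(I₄, I₂ ⊗ V) is the gate applying V to the third qubit controlled on the first qubit, Λ₁(W) = diag(I₂, W), CNOT = Λ₁(σ_x), and Λ₂(σ_x) = diag(I₆, σ_x) is the Toffoli gate. -/

import Mathlib

open Matrix

noncomputable def sigmaX : Matrix (Fin 2) (Fin 2) ℂ := !![0, 1; 1, 0]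
noncomputable def sigmaZhalf : Matrix (Fin 2) (Fin 2) ℂ := !![1, 0; 0, Complex.I]
noncomputable def sigmaZhalfInv : Matrix (Fin 2) (Fin 2) ℂ := !![1, 0; 0, -Complex.I]
noncomputable def Hmat : Matrix (Fin 2) (Fin 2) ℂ :=
  (Real.sqrt 2 : ℂ)⁻¹ • !![1, 1; 1, -1]

/-- `V = σ_x^{1/2} = H σ_z^{1/2} H`. -/
noncomputable def Vgate : Matrix (Fin 2) (Fin 2) ℂ := Hmat * sigmaZhalf * Hmat

/-- `V⁻¹ = σ_x^{−1/2} = H σ_z^{−1/2} H`. -/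
noncomputable def VgateInv : Matrix (Fin 2) (Fin 2) ℂ := Hmat * sigmaZhalfInv * Hmat

/-- The Toffoli gate `Λ₂(σ_x) = diag(I₆, σ_x)`. -/
noncomputable def toffoli :
    Matrix (Fin 2 × Fin 2 × Fin 2) (Fin 2 × Fin 2 × Fin 2) ℂ :=
  Matrix.of fun p q =>
    if p.1 = q.1 ∧ p.2.1 = q.2.1 then
      (if p.1 = 1 ∧ p.2.1 = 1 then sigmaX p.2.2 q.2.2
       else (if p.2.2 = q.2.2 then 1 else 0))
    else 0

/-- `Λ^{1→3}(W)`: apply `W` to the third qubit, controlled on the first qubit. -/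
noncomputable def ctrl13 (W : Matrix (Fin 2) (Fin 2) ℂ) :
    Matrix (Fin 2 × Fin 2 × Fin 2) (Fin 2 × Fin 2 × Fin 2) ℂ :=
  Matrix.of fun p q =>
    if p.1 = q.1 ∧ p.2.1 = q.2.1 then
      (if p.1 = 1 then W p.2.2 q.2.2 else (if p.2.2 = q.2.2 then 1 else 0))
    else 0

/-- `CNOT ⊗ I₂`: CNOT with control qubit 1 and target qubit 2. -/
noncomputable def cnot12 :
    Matrix (Fin 2 × Fin 2 × Fin 2) (Fin 2 × Fin 2 × Fin 2) ℂ :=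
  Matrix.of fun p q =>
    (if p.1 = q.1 ∧ p.2.1 = q.1 + q.2.1 then (1 : ℂ) else 0) *
      (if p.2.2 = q.2.2 then 1 else 0)

/-- `I₂ ⊗ Λ₁(W)`: apply `W` to the third qubit, controlled on the second qubit. -/
noncomputable def ctrl23 (W : Matrix (Fin 2) (Fin 2) ℂ) :
    Matrix (Fin 2 × Fin 2 × Fin 2) (Fin 2 × Fin 2 × Fin 2) ℂ :=
  Matrix.of fun p q =>
    (if p.1 = q.1 then (1 : ℂ) else 0) *
      (if p.2.1 = q.2.1 then
        (if p.2.1 = 0 then (if p.2.2 = q.2.2 then 1 else 0) else W p.2.2 q.2.2)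
       else 0)


lemma Vgate_eq : Vgate = !![(1+Complex.I)/2, (1-Complex.I)/2; (1-Complex.I)/2, (1+Complex.I)/2] := by
  have h2 : ((Real.sqrt 2 : ℝ) : ℂ) * ((Real.sqrt 2 : ℝ) : ℂ) = 2 := by
    norm_cast
    rw [← Real.sqrt_mul_self (by norm_num : (0:ℝ) ≤ 2)]
    norm_num
  have hne : ((Real.sqrt 2 : ℝ) : ℂ) ≠ 0 := by
    intro h; rw [h, mul_zero] at h2; norm_num at h2
  ext i j
  fin_cases i <;> fin_cases j <;>
    simp [Vgate, Hmat, sigmaZhalf, Matrix.mul_apply, Fin.sum_univ_two] <;>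
    field_simp <;> (rw [sq, h2]; ring)

lemma VgateInv_eq : VgateInv = !![(1-Complex.I)/2, (1+Complex.I)/2; (1+Complex.I)/2, (1-Complex.I)/2] := by
  have h2 : ((Real.sqrt 2 : ℝ) : ℂ) * ((Real.sqrt 2 : ℝ) : ℂ) = 2 := by
    norm_cast
    rw [← Real.sqrt_mul_self (by norm_num : (0:ℝ) ≤ 2)]
    norm_num
  have hne : ((Real.sqrt 2 : ℝ) : ℂ) ≠ 0 := by
    intro h; rw [h, mul_zero] at h2; norm_num at h2
  ext i j
  fin_cases i <;> fin_cases j <;>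
    simp [VgateInv, Hmat, sigmaZhalfInv, Matrix.mul_apply, Fin.sum_univ_two] <;>
    field_simp <;> (rw [sq, h2]; ring)

set_option maxHeartbeats 10000000 in
/-- Decomposition of the Toffoli gate:
`Λ₂(σ_x) = Λ^{1→3}(V) (CNOT⊗I₂) (I₂⊗Λ₁(V⁻¹)) (CNOT⊗I₂) (I₂⊗Λ₁(V))`. -/
theorem stmt18 :
    toffoli =
      ctrl13 Vgate * cnot12 * ctrl23 VgateInv * cnot12 * ctrl23 Vgate := by
  rw [Vgate_eq, VgateInv_eq]
  ext ⟨a, b, c⟩ ⟨d, e, f⟩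
  fin_cases a <;> fin_cases b <;> fin_cases c <;> fin_cases d <;> fin_cases e <;> fin_cases f <;>
    simp [toffoli, ctrl13, cnot12, ctrl23, sigmaX, Matrix.mul_apply,
      Fintype.sum_prod_type, Fin.sum_univ_two, Fin.ext_iff, -Fin.val_eq_zero_iff] <;>
    ring_nf <;> norm_num [Complex.ext_iff]
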